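/- Let E ⊆ ℝ. If the coarse Minkowski dimension of E is strictly positive, then there exist n ∈ ℕ and a linear map T : ℝⁿ → ℝ such that T(Eⁿ) is dense in ℝ. -/

import Mathlib

open Filter Metric Set

/-- `coverNum δ X` is the minimum number of open balls of radius `δ` needed to cover `X`
(equal to `0` if no finite cover exists, by convention of `sInf` on `ℕ`). -/
noncomputable def coverNum {α : Type*} [PseudoMetricSpace α] (δ : ℝ) (X : Set α) : ℕ :=
  sInf {k : ℕ | ∃ S : Finset α, S.card = k ∧ X ⊆ ⋃ p ∈ S, Metric.ball p δ}

/-- The coarse Minkowski dimension of `Z`: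
`limsup_{r → ∞} log M(1, B(0,r) ∩ Z) / log r`. -/
noncomputable def dimCM {α : Type*} [SeminormedAddGroup α] (Z : Set α) : ℝ :=
  limsup (fun r : ℝ =>
    Real.log (coverNum 1 (Metric.ball (0 : α) r ∩ Z) : ℝ) / Real.log r) atTop

lemma window_bound (P : Finset ℝ) (hsep : ∀ p ∈ P, ∀ q ∈ P, p ≠ q → 2 ≤ |p - q|)
    (c : ℝ) (R : ℕ) :
    (P.filter fun p => |p - c| < (R : ℝ)).card ≤ R := by
  classical
  have key : ∀ a b : ℝ, 0 ≤ a → a + 1 ≤ b → ⌊a⌋₊ < ⌊b⌋₊ := by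
    intro a b ha hab
    have h1 : ⌊a + 1⌋₊ ≤ ⌊b⌋₊ := Nat.floor_mono hab
    rw [Nat.floor_add_one ha] at h1
    omega

  have hinj : Set.InjOn (fun p => ⌊(p - c + R) / 2⌋₊)
      ↑(P.filter fun p => |p - c| < (R : ℝ)) := by
    intro p hp q hq hpq
    simp only [Finset.coe_filter, Set.mem_setOf_eq] at hp hq
    have hpq' : ⌊(p - c + (R:ℝ)) / 2⌋₊ = ⌊(q - c + (R:ℝ)) / 2⌋₊ := hpq
    by_contra hne
    have h2 : 2 ≤ |p - q| := hsep p hp.1 q hq.1 hne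
    have hp1 := abs_lt.1 hp.2
    have hq1 := abs_lt.1 hq.2
    rcases le_abs.1 h2 with h | h
    · have : ⌊(q - c + R) / 2⌋₊ < ⌊(p - c + R) / 2⌋₊ := by
        apply key _ _ (by linarith [hq1.1]) (by linarith)
      omega
    · have : ⌊(p - c + R) / 2⌋₊ < ⌊(q - c + R) / 2⌋₊ := by
        apply key _ _ (by linarith [hp1.1]) (by linarith)
      omega
  have hmaps : ∀ p ∈ (P.filter fun p => |p - c| < (R : ℝ)),
      ⌊(p - c + R) / 2⌋₊ ∈ Finset.range R := by
    intro p hp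
    simp only [Finset.mem_filter] at hp
    have hp1 := abs_lt.1 hp.2
    simp only [Finset.mem_range]
    have h0 : 0 ≤ (p - c + R) / 2 := by linarith [hp1.1]
    have : (p - c + R) / 2 < R := by linarith [hp1.2]
    exact Nat.floor_lt h0 |>.2 (by exact this)
  calc (P.filter fun p => |p - c| < (R : ℝ)).card
      = ((P.filter fun p => |p - c| < (R : ℝ))).card := rfl
    _ ≤ (Finset.range R).card := Finset.card_le_card_of_injOn _ hmaps hinj
    _ = R := Finset.card_range R

lemma coverNum_le (X : Set ℝ) (δ : ℝ) (Q : Finset ℝ) (h : X ⊆ ⋃ p ∈ Q, Metric.ball p δ) :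
    coverNum δ X ≤ Q.card :=
  Nat.sInf_le ⟨Q, rfl, h⟩

lemma exists_net (X : Set ℝ) (r : ℝ) (hr : 0 < r) (hX : X ⊆ Metric.ball 0 r) :
    ∃ P : Finset ℝ, ↑P ⊆ X ∧ (∀ p ∈ P, ∀ q ∈ P, p ≠ q → 2 ≤ |p - q|) ∧
      X ⊆ ⋃ p ∈ P, Metric.ball (p : ℝ) 2 := by
  classical
  set K : Set ℕ := {k : ℕ | ∃ P : Finset ℝ, ↑P ⊆ X ∧
    (∀ p ∈ P, ∀ q ∈ P, p ≠ q → 2 ≤ |p - q|) ∧ P.card = k} with hK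
  have hne : K.Nonempty := ⟨0, ∅, by simp⟩
  have hbdd : BddAbove K := by
    refine ⟨⌈r⌉₊, ?_⟩
    rintro k ⟨P, hPX, hsep, rfl⟩
    have hall : ∀ p ∈ P, |p - 0| < ((⌈r⌉₊ : ℕ) : ℝ) := by
      intro p hp
      have := hX (hPX hp)
      rw [Metric.mem_ball, Real.dist_eq] at this
      exact lt_of_lt_of_le (by simpa using this) (by exact_mod_cast Nat.le_ceil r)
    rw [← Finset.filter_true_of_mem hall]
    exact window_bound P hsep 0 ⌈r⌉₊
  obtain ⟨P, hPX, hsep, hcard⟩ := Nat.sSup_mem hne hbdd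
  refine ⟨P, hPX, hsep, ?_⟩
  intro x hx
  by_contra hxP
  simp only [Set.mem_iUnion, Metric.mem_ball, Real.dist_eq, not_exists] at hxP
  push_neg at hxP
  have hfar : ∀ p ∈ P, 2 ≤ |x - p| := hxP
  have hxnotP : x ∉ P := by
    intro hmem
    have := hfar x hmem
    simp only [sub_self, abs_zero] at this
    linarith
  have : (insert x P).card ∈ K := by
    refine ⟨insert x P, ?_, ?_, rfl⟩
    · intro y hy
      rcases Finset.mem_insert.1 (by exact_mod_cast hy) with rfl | hy'
      · exact hx
      · exact hPX hy'
    · intro p hp q hq hpq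
      rcases Finset.mem_insert.1 hp with rfl | hp' <;>
        rcases Finset.mem_insert.1 hq with rfl | hq'
      · exact absurd rfl hpq
      · exact hfar q hq'
      · rw [abs_sub_comm]; exact hfar p hp'
      · exact hsep p hp' q hq' hpq
  have hle := le_csSup hbdd this
  rw [Finset.card_insert_of_notMem hxnotP, hcard] at hle
  omega

lemma ball2_subset (p : ℝ) :
    Metric.ball p 2 ⊆ Metric.ball (p - 4/3) 1 ∪ Metric.ball p 1 ∪ Metric.ball (p + 4/3) 1 := by
  intro x hx
  rw [Metric.mem_ball, Real.dist_eq] at hx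
  have hx' := abs_lt.1 hx
  rcases le_or_gt (x - p) (-(2/3 : ℝ)) with h1 | h1
  · left; left
    rw [Metric.mem_ball, Real.dist_eq, abs_lt]
    constructor <;> linarith [hx'.1]
  · rcases le_or_gt (2/3 : ℝ) (x - p) with h2 | h2
    · right
      rw [Metric.mem_ball, Real.dist_eq, abs_lt]
      constructor <;> linarith [hx'.2]
    · left; right
      rw [Metric.mem_ball, Real.dist_eq, abs_lt]
      constructor <;> linarith

lemma packing (X : Set ℝ) (r : ℝ) (hr : 0 < r) (hX : X ⊆ Metric.ball 0 r) :
    ∃ P : Finset ℝ, ↑P ⊆ X ∧ (∀ p ∈ P, ∀ q ∈ P, p ≠ q → 2 ≤ |p - q|) ∧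
      coverNum 1 X ≤ 3 * P.card := by
  classical
  obtain ⟨P, hPX, hsep, hcov⟩ := exists_net X r hr hX
  refine ⟨P, hPX, hsep, ?_⟩
  set Q : Finset ℝ := P.image (fun p => p - 4/3) ∪ P ∪ P.image (fun p => p + 4/3) with hQ
  have hCover : X ⊆ ⋃ q ∈ Q, Metric.ball q 1 := by
    intro x hx
    obtain ⟨_, ⟨p, rfl⟩, hmem⟩ := hcov hx
    simp only [Set.mem_iUnion] at hmem
    obtain ⟨hp, hball⟩ := hmem
    have := ball2_subset p hball
    simp only [Set.mem_iUnion]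
    rcases this with (h | h) | h
    · exact ⟨p - 4/3, Finset.mem_union_left _ (Finset.mem_union_left _
        (Finset.mem_image_of_mem _ hp)), h⟩
    · exact ⟨p, Finset.mem_union_left _ (Finset.mem_union_right _ hp), h⟩
    · exact ⟨p + 4/3, Finset.mem_union_right _ (Finset.mem_image_of_mem _ hp), h⟩
  have h0 : coverNum 1 X ≤ Q.card := coverNum_le X 1 Q hCover
  have h1 : Q.card ≤ (P.image (fun p => p - 4/3) ∪ P).card + (P.image (fun p => p + 4/3)).card :=
    Finset.card_union_le _ _
  have h2 : (P.image (fun p => p - 4/3) ∪ P).card ≤ (P.image (fun p => p - 4/3)).card + P.card :=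
    Finset.card_union_le _ _
  have h3 : (P.image (fun p => p - 4/3)).card ≤ P.card := Finset.card_image_le
  have h4 : (P.image (fun p => p + 4/3)).card ≤ P.card := Finset.card_image_le
  omega

lemma freq (E : Set ℝ) (h : 0 < dimCM E) :
    ∃ ε : ℝ, 0 < ε ∧ ∀ r₀ : ℝ, ∃ r : ℝ, r₀ ≤ r ∧ 2 ≤ r ∧
      r ^ ε ≤ (coverNum 1 (Metric.ball (0:ℝ) r ∩ E) : ℝ) := by
  classical
  set f : ℝ → ℝ := fun r =>
    Real.log (coverNum 1 (Metric.ball (0 : ℝ) r ∩ E) : ℝ) / Real.log r with hf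
  set ε : ℝ := dimCM E / 2 with hε
  have hεpos : 0 < ε := by rw [hε]; linarith
  have hfnonneg : ∀ r : ℝ, 2 ≤ r → 0 ≤ f r := by
    intro r hr
    apply div_nonneg
    · rcases Nat.eq_zero_or_pos (coverNum 1 (Metric.ball (0 : ℝ) r ∩ E)) with h0 | h0
      · rw [h0]; simp
      · apply Real.log_nonneg; exact_mod_cast h0
    · apply Real.log_nonneg; linarith
  have hco : IsCoboundedUnder (· ≤ ·) atTop f :=
    isCoboundedUnder_le_of_eventually_le atTop
      ((eventually_ge_atTop 2).mono fun r hr => hfnonneg r hr)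
  have hnot : ¬ ∀ᶠ r in atTop, f r ≤ ε := by
    intro hev
    have hle : limsup f atTop ≤ ε := limsup_le_of_le hco hev
    have : dimCM E ≤ ε := hle
    rw [hε] at this; linarith
  rw [Filter.not_eventually] at hnot
  have hfreq := frequently_atTop.1 (hnot.mono fun r hr => lt_of_not_ge hr)
  refine ⟨ε, hεpos, fun r₀ => ?_⟩
  obtain ⟨r, hr1, hr2⟩ := hfreq (max r₀ 2)
  refine ⟨r, le_trans (le_max_left _ _) hr1, le_trans (le_max_right _ _) hr1, ?_⟩
  have hr2' : 2 ≤ r := le_trans (le_max_right _ _) hr1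
  have hlogr : 0 < Real.log r := Real.log_pos (by linarith)
  have hlt : ε * Real.log r < Real.log (coverNum 1 (Metric.ball (0:ℝ) r ∩ E) : ℝ) :=
    (lt_div_iff₀ hlogr).1 hr2
  have hMpos : (0:ℝ) < (coverNum 1 (Metric.ball (0:ℝ) r ∩ E) : ℝ) := by
    by_contra hM
    push_neg at hM
    have : (coverNum 1 (Metric.ball (0:ℝ) r ∩ E) : ℝ) = 0 := le_antisymm hM (by positivity)
    rw [this, Real.log_zero] at hlt
    nlinarith
  calc r ^ ε = Real.exp (ε * Real.log r) := by
        rw [Real.rpow_def_of_pos (by linarith)]; ring_nf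
    _ ≤ Real.exp (Real.log (coverNum 1 (Metric.ball (0:ℝ) r ∩ E) : ℝ)) :=
        Real.exp_le_exp.2 hlt.le
    _ = _ := Real.exp_log hMpos

lemma key (E : Set ℝ) (ε : ℝ) (hε : 0 < ε)
    (hfreq : ∀ r₀ : ℝ, ∃ r, r₀ ≤ r ∧ 2 ≤ r ∧
      r ^ ε ≤ (coverNum 1 (Metric.ball (0:ℝ) r ∩ E) : ℝ))
    (n : ℕ) (hn : (2:ℝ) ≤ (n:ℝ) * ε)
    (a₀ : Fin n → ℝ) (u δ : ℝ) (hδ : 0 < δ) :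
    ∃ (a : Fin n → ℝ) (x x' : Fin n → ℝ), (∀ i, x i ∈ E) ∧ (∀ i, x' i ∈ E) ∧
      (∑ i, a i * (x i - x' i)) = u ∧ dist a a₀ < δ := by
  classical
  set A : ℝ := ∑ i, |a₀ i| with hA
  have hA0 : 0 ≤ A := Finset.sum_nonneg fun i _ => abs_nonneg _
  set Rn : ℕ := ⌊(1 + |u|) / δ⌋₊ + 1 with hRn
  have hRn1 : 1 ≤ Rn := Nat.le_add_left 1 _
  have hRnpos : (0:ℝ) < Rn := by exact_mod_cast Nat.succ_le_iff.1 hRn1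
  have hRnδ : (1 + |u|) / (Rn:ℝ) < δ := by
    have h1 : (1 + |u|) / δ < Rn := by
      rw [hRn]; push_cast
      exact Nat.lt_floor_add_one _
    rw [div_lt_iff₀ hRnpos]
    rw [div_lt_iff₀ hδ] at h1
    linarith
  set C : ℝ := 3^n * (2*A + 3) * (Rn:ℝ)^n with hC
  have hCpos : 0 < C := by positivity
  obtain ⟨r, hrC, hr2, hrM⟩ := hfreq (max (C + 1) 2)
  have hrC' : C + 1 ≤ r := le_trans (le_max_left _ _) hrC
  have hr1 : (1:ℝ) < r := by linarith
  have hrpos : (0:ℝ) < r := by linarith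
  -- packing
  obtain ⟨P, hPX, hsep, hpack⟩ := packing (Metric.ball (0:ℝ) r ∩ E) r hrpos
    Set.inter_subset_left
  set N : ℕ := P.card with hN
  have hNlow : r ^ ε / 3 ≤ (N : ℝ) := by
    have : r ^ ε ≤ (3 * N : ℕ) := le_trans hrM (by exact_mod_cast hpack)
    push_cast at this
    linarith
  have hrε : (0:ℝ) < r ^ ε := Real.rpow_pos_of_pos hrpos ε
  -- pigeonhole setup
  set s : Finset (Fin n → ℝ) := Fintype.piFinset (fun _ : Fin n => P) with hs
  set fl : (Fin n → ℝ) → ℤ := fun x => ⌊∑ i, a₀ i * x i⌋ with hfl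
  set t : Finset ℤ := Finset.Icc (-(⌈A * r⌉)) ⌈A * r⌉ with ht
  have hPr : ∀ p ∈ P, |p| < r := by
    intro p hp
    have := (hPX hp).1
    rwa [Metric.mem_ball, Real.dist_eq, sub_zero] at this
  have hsum_bound : ∀ x ∈ s, |∑ i, a₀ i * x i| ≤ A * r := by
    intro x hx
    rw [Fintype.mem_piFinset] at hx
    calc |∑ i, a₀ i * x i| ≤ ∑ i, |a₀ i * x i| := Finset.abs_sum_le_sum_abs _ _
      _ ≤ ∑ i, |a₀ i| * r := by
          apply Finset.sum_le_sum
          intro i _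
          rw [abs_mul]
          exact mul_le_mul_of_nonneg_left (hPr _ (hx i)).le (abs_nonneg _)
      _ = A * r := by rw [hA, Finset.sum_mul]
  have hmaps : ∀ x ∈ s, fl x ∈ t := by
    intro x hx
    have hb := abs_le.1 (hsum_bound x hx)
    rw [ht, Finset.mem_Icc]
    constructor
    · rw [Int.le_floor]
      push_cast
      calc -(⌈A * r⌉ : ℝ) ≤ -(A * r) := by
            have := Int.le_ceil (A * r); linarith
        _ ≤ _ := hb.1
    · calc fl x ≤ ⌊A * r⌋ := Int.floor_le_floor hb.2
        _ ≤ ⌈A * r⌉ := Int.floor_le_ceil _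
  have htcard : (t.card : ℝ) ≤ (2*A + 3) * r := by
    rw [ht]
    have h1 : (⌈A * r⌉ : ℝ) ≤ A * r + 1 := by
      have h2 : ⌈A * r⌉ ≤ ⌊A * r⌋ + 1 := Int.ceil_le_floor_add_one _
      have h3 := Int.floor_le (A * r)
      have h4 : ((⌈A * r⌉ : ℤ) : ℝ) ≤ ((⌊A * r⌋ + 1 : ℤ) : ℝ) := by exact_mod_cast h2
      push_cast at h4
      linarith
    have hcc : (Finset.Icc (-(⌈A * r⌉)) ⌈A * r⌉).card = (2 * ⌈A * r⌉ + 1).toNat := by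
      rw [Int.card_Icc]
      congr 1
      ring
    rw [hcc]
    have hnn : (0:ℤ) ≤ 2 * ⌈A * r⌉ + 1 := by
      have : (0:ℤ) ≤ ⌈A * r⌉ := Int.ceil_nonneg (by positivity)
      omega
    have hcast : (((2 * ⌈A * r⌉ + 1).toNat : ℤ) : ℝ) = 2*(⌈A * r⌉:ℝ)+1 := by
      rw [Int.toNat_of_nonneg hnn]; push_cast; ring
    push_cast at hcast ⊢
    rw [hcast]
    nlinarith
  -- cardinality comparison
  have hscard : s.card = N ^ n := by
    rw [hs, Fintype.card_piFinset]
    simp [hN]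
  have hNn : (r ^ ε / 3) ^ n ≤ ((N:ℝ)) ^ n :=
    pow_le_pow_left₀ (by positivity) hNlow n
  have hrεn : r ^ ((2:ℝ)) ≤ r ^ (ε * n) := by
    apply Real.rpow_le_rpow_left_iff hr1 |>.2
    rw [mul_comm]
    exact hn
  have hpow_eq : (r ^ ε) ^ n = r ^ (ε * (n:ℝ)) := by
    rw [← Real.rpow_natCast (r ^ ε) n, ← Real.rpow_mul hrpos.le]
  have hr2eq : r ^ ((2:ℝ)) = r * r := by
    rw [show ((2:ℝ)) = ((2:ℕ):ℝ) by norm_num, Real.rpow_natCast]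
    ring
  have hmain : (t.card : ℝ) * (Rn:ℝ)^n < (N:ℝ)^n := by
    have h5 : (t.card : ℝ) * (Rn:ℝ)^n ≤ (2*A+3) * r * (Rn:ℝ)^n := by
      apply mul_le_mul_of_nonneg_right htcard (by positivity)
    have h6 : (2*A+3) * r * (Rn:ℝ)^n < r * r / 3^n := by
      rw [lt_div_iff₀ (by positivity : (0:ℝ) < 3^n)]
      have hCr : C * r < r * r := by nlinarith
      calc (2*A+3) * r * (Rn:ℝ)^n * 3^n = C * r := by rw [hC]; ring
        _ < r * r := hCr
    have h7 : r * r / 3^n ≤ (N:ℝ)^n := by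
      calc r * r / 3^n = r ^ ((2:ℝ)) / 3^n := by rw [hr2eq]
        _ ≤ r ^ (ε * (n:ℝ)) / 3^n := by
            apply div_le_div_of_nonneg_right ?_ (by positivity)
            · exact hrεn
        _ = (r ^ ε) ^ n / 3^n := by rw [hpow_eq]
        _ = (r ^ ε / 3) ^ n := by rw [div_pow]
        _ ≤ (N:ℝ)^n := hNn
    linarith
  have hcard_lt : t.card * Rn ^ n < s.card := by
    rw [hscard]
    exact_mod_cast hmain
  obtain ⟨y, hyt, hfiber⟩ :=
    Finset.exists_lt_card_fiber_of_mul_lt_card_of_maps_to hmaps hcard_lt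
  set F : Finset (Fin n → ℝ) := s.filter (fun x => fl x = y) with hF
  have hFs : F ⊆ s := Finset.filter_subset _ _
  have hFne : F.Nonempty := Finset.card_pos.1 (lt_of_le_of_lt (Nat.zero_le _) hfiber)
  -- find two tuples with a far coordinate
  have hfar : ∃ x ∈ F, ∃ x' ∈ F, ∃ i, (Rn:ℝ) ≤ |x i - x' i| := by
    by_contra hcon
    push_neg at hcon
    obtain ⟨x₀, hx₀⟩ := hFne
    have hsub : F ⊆ Fintype.piFinset (fun i => P.filter fun p => |p - x₀ i| < (Rn:ℝ)) := by
      intro x hx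
      rw [Fintype.mem_piFinset]
      intro i
      rw [Finset.mem_filter]
      refine ⟨Fintype.mem_piFinset.1 (hFs hx) i, ?_⟩
      exact hcon x hx x₀ hx₀ i
    have hcard2 : F.card ≤ Rn ^ n := by
      calc F.card ≤ (Fintype.piFinset (fun i => P.filter fun p => |p - x₀ i| < (Rn:ℝ))).card :=
            Finset.card_le_card hsub
        _ = ∏ i, (P.filter fun p => |p - x₀ i| < (Rn:ℝ)).card := Fintype.card_piFinset _
        _ ≤ ∏ _i : Fin n, Rn := Finset.prod_le_prod (fun _ _ => Nat.zero_le _)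
            (fun i _ => window_bound P hsep (x₀ i) Rn)
        _ = Rn ^ n := by simp
    omega
  obtain ⟨x, hxF, x', hx'F, i₀, hi₀⟩ := hfar
  have hxs := hFs hxF
  have hx's := hFs hx'F
  have hxP : ∀ i, x i ∈ P := Fintype.mem_piFinset.1 hxs
  have hx'P : ∀ i, x' i ∈ P := Fintype.mem_piFinset.1 hx's
  have hxE : ∀ i, x i ∈ E := fun i => (hPX (hxP i)).2
  have hx'E : ∀ i, x' i ∈ E := fun i => (hPX (hx'P i)).2
  -- same floor ⇒ sums within 1
  have hfx : fl x = y := (Finset.mem_filter.1 hxF).2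
  have hfx' : fl x' = y := (Finset.mem_filter.1 hx'F).2
  have hclose : |∑ i, a₀ i * x i - ∑ i, a₀ i * x' i| < 1 := by
    have h8 : ⌊∑ i, a₀ i * x i⌋ = ⌊∑ i, a₀ i * x' i⌋ := by
      rw [show ⌊∑ i, a₀ i * x i⌋ = fl x from rfl, show ⌊∑ i, a₀ i * x' i⌋ = fl x' from rfl,
        hfx, hfx']
    rw [abs_sub_lt_iff]
    have l1 := Int.floor_le (∑ i, a₀ i * x i)
    have l2 := Int.lt_floor_add_one (∑ i, a₀ i * x i)
    have l3 := Int.floor_le (∑ i, a₀ i * x' i)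
    have l4 := Int.lt_floor_add_one (∑ i, a₀ i * x' i)
    rw [h8] at l1 l2
    constructor <;> linarith
  -- the perturbation
  set z : Fin n → ℝ := fun i => x i - x' i with hz
  set S : ℝ := ∑ i, z i ^ 2 with hS
  have hzi₀ : (Rn:ℝ)^2 ≤ z i₀ ^ 2 := by
    have : (Rn:ℝ)^2 ≤ |z i₀|^2 := by
      apply pow_le_pow_left₀ hRnpos.le
      exact hi₀
    rwa [sq_abs] at this
  have hSge : (Rn:ℝ)^2 ≤ S := by
    calc (Rn:ℝ)^2 ≤ z i₀ ^ 2 := hzi₀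
      _ ≤ S := Finset.single_le_sum (fun i _ => sq_nonneg (z i)) (Finset.mem_univ i₀)
  have hSpos : 0 < S := lt_of_lt_of_le (by positivity) hSge
  set t₀ : ℝ := (∑ i, a₀ i * z i - u) / S with ht₀
  set a : Fin n → ℝ := fun i => a₀ i - t₀ * z i with ha
  have hzz : ∑ i, z i * z i = S := by
    rw [hS]; congr 1; funext i; ring
  have hhit : ∑ i, a i * z i = u := by
    have : ∑ i, a i * z i = ∑ i, a₀ i * z i - t₀ * ∑ i, z i * z i := by
      rw [Finset.mul_sum, ← Finset.sum_sub_distrib]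
      congr 1; funext i; rw [ha]; ring
    rw [this, hzz, ht₀, div_mul_cancel₀ _ (ne_of_gt hSpos)]
    ring
  have hzsum : ∑ i, a₀ i * z i = ∑ i, a₀ i * x i - ∑ i, a₀ i * x' i := by
    rw [← Finset.sum_sub_distrib]
    congr 1; funext i; rw [hz]; ring
  have hB : |∑ i, a₀ i * z i - u| < 1 + |u| := by
    rw [hzsum]
    calc |∑ i, a₀ i * x i - ∑ i, a₀ i * x' i - u|
        ≤ |∑ i, a₀ i * x i - ∑ i, a₀ i * x' i| + |u| := abs_sub _ _
      _ < 1 + |u| := by linarith [hclose]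
  set σ : ℝ := Real.sqrt S with hσ
  have hσpos : 0 < σ := Real.sqrt_pos.2 hSpos
  have hσσ : σ * σ = S := Real.mul_self_sqrt hSpos.le
  have hσRn : (Rn:ℝ) ≤ σ := by
    rw [hσ]
    have : Real.sqrt ((Rn:ℝ)^2) ≤ Real.sqrt S := Real.sqrt_le_sqrt hSge
    rwa [Real.sqrt_sq hRnpos.le] at this
  have hdist : dist a a₀ < δ := by
    rw [dist_pi_lt_iff hδ]
    intro i
    rw [Real.dist_eq, ha]
    have hzi : |z i| ≤ σ := by
      have h9 : z i ^ 2 ≤ S := Finset.single_le_sum (fun j _ => sq_nonneg (z j))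
        (Finset.mem_univ i)
      have : Real.sqrt (z i ^ 2) ≤ σ := Real.sqrt_le_sqrt h9
      rwa [Real.sqrt_sq_eq_abs] at this
    have habs : |a₀ i - t₀ * z i - a₀ i| = |t₀| * |z i| := by
      rw [show a₀ i - t₀ * z i - a₀ i = -(t₀ * z i) by ring, abs_neg, abs_mul]
    rw [habs]
    have ht₀abs : |t₀| = |∑ i, a₀ i * z i - u| / S := by
      rw [ht₀, abs_div, abs_of_pos hSpos]
    calc |t₀| * |z i| ≤ |t₀| * σ := mul_le_mul_of_nonneg_left hzi (abs_nonneg _)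
      _ = |∑ i, a₀ i * z i - u| / S * σ := by rw [ht₀abs]
      _ = |∑ i, a₀ i * z i - u| / σ := by
          rw [← hσσ]; field_simp
      _ < (1 + |u|) / σ := by
          apply div_lt_div_of_pos_right hB hσpos
      _ ≤ (1 + |u|) / (Rn:ℝ) := by
          apply div_le_div_of_nonneg_left (by positivity) hRnpos hσRn
      _ < δ := hRnδ
  exact ⟨a, x, x', hxE, hx'E, hhit, hdist⟩

theorem stmt0 (E : Set ℝ) (h : 0 < dimCM E) :
    ∃ (n : ℕ) (T : EuclideanSpace ℝ (Fin n) →ₗ[ℝ] ℝ),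
      Dense (⇑T '' {x : EuclideanSpace ℝ (Fin n) | ∀ i, x i ∈ E}) := by
  classical
  obtain ⟨ε, hε, hfreq⟩ := freq E h
  set n : ℕ := ⌈2/ε⌉₊ + 1 with hn_def
  have hn : (2:ℝ) ≤ (n:ℝ) * ε := by
    have h1 : 2/ε ≤ (⌈2/ε⌉₊ : ℝ) := Nat.le_ceil _
    have h2 : ((⌈2/ε⌉₊ : ℕ) : ℝ) ≤ (n : ℝ) := by
      rw [hn_def]; push_cast; linarith
    have : 2/ε * ε ≤ (n:ℝ) * ε := by
      apply mul_le_mul_of_nonneg_right (le_trans h1 h2) hε.le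
    rwa [div_mul_cancel₀ _ (ne_of_gt hε)] at this
  -- the good sets
  set G : ℚ × ℚ → Set (Fin n → ℝ) := fun q =>
    {a | 0 < q.2 → ∃ x x' : Fin n → ℝ, (∀ i, x i ∈ E) ∧ (∀ i, x' i ∈ E) ∧
      |∑ i, a i * (x i - x' i) - (q.1 : ℝ)| < (q.2 : ℝ)} with hG
  have hopen : ∀ q, IsOpen (G q) := by
    intro q
    by_cases hq : 0 < q.2
    · rw [isOpen_iff_mem_nhds]
      intro a ha
      obtain ⟨x, x', hxE, hx'E, hlt⟩ := ha hq
      set U : Set (Fin n → ℝ) :=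
        {b | |∑ i, b i * (x i - x' i) - (q.1 : ℝ)| < (q.2 : ℝ)} with hU
      have hUopen : IsOpen U := by
        have hcont : Continuous fun b : Fin n → ℝ =>
            |∑ i, b i * (x i - x' i) - (q.1 : ℝ)| := by
          apply Continuous.abs
          apply Continuous.sub ?_ continuous_const
          apply continuous_finset_sum
          intro i _
          exact (continuous_apply i).mul continuous_const
        exact isOpen_lt hcont continuous_const
      exact Filter.mem_of_superset (hUopen.mem_nhds hlt)
        (fun b hb _ => ⟨x, x', hxE, hx'E, hb⟩)
    · have : G q = Set.univ := by
        ext a; simp only [hG, Set.mem_setOf_eq, Set.mem_univ, iff_true]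
        intro hq'; exact absurd hq' hq
      rw [this]; exact isOpen_univ
  have hdense : ∀ q, Dense (G q) := by
    intro q
    by_cases hq : 0 < q.2
    · intro a₀
      rw [Metric.mem_closure_iff]
      intro δ hδ
      obtain ⟨a, x, x', hxE, hx'E, hhit, hdist⟩ :=
        key E ε hε hfreq n hn a₀ (q.1 : ℝ) δ hδ
      refine ⟨a, fun _ => ⟨x, x', hxE, hx'E, ?_⟩, by rwa [dist_comm]⟩
      rw [hhit, sub_self, abs_zero]
      exact_mod_cast hq
    · intro a₀
      apply subset_closure
      intro hq'; exact absurd hq' hq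
  have hBaire : Dense (⋂ q, G q) := dense_iInter_of_isOpen hopen hdense
  obtain ⟨aS, haS⟩ := hBaire.nonempty
  have haSq : ∀ q : ℚ × ℚ, 0 < q.2 → ∃ x x' : Fin n → ℝ,
      (∀ i, x i ∈ E) ∧ (∀ i, x' i ∈ E) ∧
      |∑ i, aS i * (x i - x' i) - (q.1 : ℝ)| < (q.2 : ℝ) := by
    intro q
    exact Set.mem_iInter.1 haS q
  -- build the linear map
  refine ⟨n + n, ?_, ?_⟩
  · exact
      { toFun := fun y => ∑ i : Fin n, aS i * (y (Fin.castAdd n i) - y (Fin.natAdd n i))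
        map_add' := by
          intro y y'
          simp only [PiLp.add_apply]
          rw [← Finset.sum_add_distrib]
          congr 1; funext i; ring
        map_smul' := by
          intro c y
          simp only [PiLp.smul_apply, smul_eq_mul, RingHom.id_apply]
          rw [Finset.mul_sum]
          congr 1; funext i; ring }
  · rw [Metric.dense_iff]
    intro v ρ hρ
    obtain ⟨u, hu⟩ := exists_rat_near v (by linarith : (0:ℝ) < ρ/4)
    obtain ⟨η, hη1, hη2⟩ := exists_rat_btwn (by linarith : (0:ℝ) < ρ/4)
    have hηpos : 0 < η := by exact_mod_cast hη1
    obtain ⟨x, x', hxE, hx'E, hlt⟩ := haSq (u, η) hηpos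
    set y : EuclideanSpace ℝ (Fin (n + n)) := WithLp.toLp 2 (Fin.append x x') with hy
    have hyE : ∀ i, y i ∈ E := by
      intro i
      refine Fin.addCases ?_ ?_ i
      · intro j
        have : y (Fin.castAdd n j) = x j := Fin.append_left x x' j
        rw [this]; exact hxE j
      · intro j
        have : y (Fin.natAdd n j) = x' j := Fin.append_right x x' j
        rw [this]; exact hx'E j
    have hTy : ∑ i : Fin n, aS i * (y (Fin.castAdd n i) - y (Fin.natAdd n i))
        = ∑ i, aS i * (x i - x' i) := by
      congr 1; funext i
      rw [show y (Fin.castAdd n i) = x i from Fin.append_left x x' i,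
        show y (Fin.natAdd n i) = x' i from Fin.append_right x x' i]
    refine ⟨_, Metric.mem_ball.2 ?_, ⟨y, hyE, rfl⟩⟩
    simp only [LinearMap.coe_mk, AddHom.coe_mk]
    rw [hTy, Real.dist_eq]
    have h1 : |∑ i, aS i * (x i - x' i) - (u:ℝ)| < (η:ℝ) := hlt
    have h2 : |v - (u:ℝ)| < ρ/4 := hu
    calc |∑ i, aS i * (x i - x' i) - v|
        ≤ |∑ i, aS i * (x i - x' i) - (u:ℝ)| + |(u:ℝ) - v| := abs_sub_le _ _ _
      _ < (η:ℝ) + ρ/4 := by rw [abs_sub_comm (u:ℝ) v]; linarith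
      _ < ρ := by linarith
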